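/- Maximizing expected reward is invariant to constant feature shifts, but risk-averse (worst-case) planning is not: (a) for any finite posterior sample {w₁,…,w_k} ⊆ ℝⁿ with mean w̄, and any φ₀ ∈ ℝⁿ, argmax_{ξ∈Ξ} w̄ᵀ(φ(ξ)+φ₀) = argmax_{ξ∈Ξ} w̄ᵀφ(ξ); (b) there exist n, a two-element trajectory set Ξ = {ξ₁, ξ₂}, feature map φ, a finite set of weights, and a shift φ₀ such that argmax_ξ min_i w_iᵀφ(ξ) ≠ argmax_ξ min_i w_iᵀ(φ(ξ)+φ₀). -/
import Mathlib


open Real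

lemma iInf_fin2 (f : Fin 2 → ℝ) : ⨅ j, f j = min (f 0) (f 1) := by
  apply le_antisymm
  · exact le_min (ciInf_le (Finite.bddBelow_range f) 0)
      (ciInf_le (Finite.bddBelow_range f) 1)
  · apply le_ciInf; intro j; fin_cases j <;> simp

/-- (a) Maximizing the mean reward is invariant to constant
feature shifts; (b) worst-case (risk-averse) planning is not. -/
theorem mean_shift_invariant_worst_case_not
    {n : ℕ} {Ξ : Type*} [Fintype Ξ] [Nonempty Ξ]
    (φ : Ξ → Fin n → ℝ) (k : ℕ) (hk : 0 < k)
    (ws : Fin k → Fin n → ℝ) (wbar : Fin n → ℝ)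
    (hbar : wbar = fun i => (∑ j, ws j i) / k) (φ₀ : Fin n → ℝ) :
    -- (a) argmax under the mean weights is shift invariant
    ({ξ : Ξ | ∀ ξ' : Ξ, (∑ i, wbar i * (φ ξ' i + φ₀ i)) ≤ ∑ i, wbar i * (φ ξ i + φ₀ i)}
      = {ξ : Ξ | ∀ ξ' : Ξ, (∑ i, wbar i * φ ξ' i) ≤ ∑ i, wbar i * φ ξ i}) ∧
    -- (b) there is a counterexample for worst-case planning
    (∃ (m : ℕ) (ψ : Fin 2 → Fin m → ℝ) (l : ℕ) (_ : 0 < l)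
        (vs : Fin l → Fin m → ℝ) (ψ₀ : Fin m → ℝ),
      {ξ : Fin 2 | ∀ ξ' : Fin 2,
          (⨅ j : Fin l, ∑ i, vs j i * ψ ξ' i) ≤ ⨅ j : Fin l, ∑ i, vs j i * ψ ξ i}
      ≠ {ξ : Fin 2 | ∀ ξ' : Fin 2,
          (⨅ j : Fin l, ∑ i, vs j i * (ψ ξ' i + ψ₀ i)) ≤
            ⨅ j : Fin l, ∑ i, vs j i * (ψ ξ i + ψ₀ i)}) := by
  constructor
  · have key : ∀ ξ : Ξ, (∑ i, wbar i * (φ ξ i + φ₀ i))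
        = (∑ i, wbar i * φ ξ i) + ∑ i, wbar i * φ₀ i := by
      intro ξ
      rw [← Finset.sum_add_distrib]
      congr 1; ext i; ring
    ext ξ
    simp only [Set.mem_setOf_eq, key]
    constructor
    · intro h ξ'; have := h ξ'; linarith
    · intro h ξ'; have := h ξ'; linarith
  · refine ⟨1, fun ξ _ => if ξ = 0 then 0 else 1, 2, by norm_num,
      fun j _ => if j = 0 then 1 else -1, fun _ => -2, ?_⟩
    intro h
    have h0 : (0 : Fin 2) ∈ {ξ : Fin 2 | ∀ ξ' : Fin 2,
        (⨅ j : Fin 2, ∑ i, (fun j (_ : Fin 1) => if j = 0 then (1:ℝ) else -1) j i *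
          (fun ξ (_ : Fin 1) => if ξ = 0 then (0:ℝ) else 1) ξ' i) ≤
        ⨅ j : Fin 2, ∑ i, (fun j (_ : Fin 1) => if j = 0 then (1:ℝ) else -1) j i *
          (fun ξ (_ : Fin 1) => if ξ = 0 then (0:ℝ) else 1) ξ i} := by
      simp only [Set.mem_setOf_eq]
      intro ξ'
      rw [iInf_fin2, iInf_fin2]
      fin_cases ξ' <;> norm_num
    rw [h] at h0
    have := h0 1
    rw [iInf_fin2, iInf_fin2] at this
    norm_num at this
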